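/- arXiv:2301.00587 — 10 statements merged into one kernel-verified Lean document; each statement's English description precedes it below -/
import Mathlib

section
/- Let x̲ ≤ x̄ and y̲ ≤ ȳ be real numbers and let B = [x̲, x̄] × [y̲, ȳ] ⊆ ℝ². If φ : ℝ² → ℝ is convex on B and satisfies φ(x, y) ≤ x·y for all (x, y) ∈ B, then φ(x, y) ≤ max(x̲·y + y̲·x − x̲·y̲, x̄·y + ȳ·x − x̄·ȳ) for all (x, y) ∈ B. That is, the pointwise maximum of the two McCormick underestimators is the convex envelope of the bilinear function (x, y) ↦ x·y over the box B. -/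
private lemma three_pt_convex {S : Set (ℝ × ℝ)} {φ : ℝ × ℝ → ℝ}
    (h : ConvexOn ℝ S φ) (a b c : ℝ) (ha : 0 ≤ a) (hb : 0 ≤ b) (hc : 0 ≤ c)
    (habc : a + b + c = 1) {p1 p2 p3 : ℝ × ℝ}
    (h1 : p1 ∈ S) (h2 : p2 ∈ S) (h3 : p3 ∈ S) :
    φ (a • p1 + b • p2 + c • p3) ≤ a * φ p1 + b * φ p2 + c * φ p3 := by
  have := h.map_sum_le (t := Finset.univ) (w := ![a, b, c]) (p := ![p1, p2, p3])
    (by intro i _; fin_cases i <;> simpa) (by simp [Fin.sum_univ_three, habc])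
    (by intro i _; fin_cases i <;> simpa)
  simpa [Fin.sum_univ_three, smul_eq_mul, add_assoc] using this

/-- The pointwise maximum of the two McCormick underestimators is the convex
envelope of the bilinear function `(x, y) ↦ x * y` over the box
`[xl, xu] × [yl, yu]`: any function that is convex on the box and
underestimates the product on the box is dominated by this maximum. -/
theorem mccormick_convex_envelope
    (xl xu yl yu : ℝ) (hx : xl ≤ xu) (hy : yl ≤ yu)
    (φ : ℝ × ℝ → ℝ)
    (hconv : ConvexOn ℝ (Set.Icc xl xu ×ˢ Set.Icc yl yu) φ)
    (hunder : ∀ p ∈ Set.Icc xl xu ×ˢ Set.Icc yl yu, φ p ≤ p.1 * p.2) :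
    ∀ p ∈ Set.Icc xl xu ×ˢ Set.Icc yl yu,
      φ p ≤ max (xl * p.2 + yl * p.1 - xl * yl) (xu * p.2 + yu * p.1 - xu * yu) := by
  rintro ⟨x, y⟩ hp
  obtain ⟨⟨hx1, hx2⟩, ⟨hy1, hy2⟩⟩ := hp
  simp only at hx1 hx2 hy1 hy2
  have hpmem : (x, y) ∈ Set.Icc xl xu ×ˢ Set.Icc yl yu :=
    ⟨⟨hx1, hx2⟩, ⟨hy1, hy2⟩⟩
  -- degenerate cases
  rcases eq_or_lt_of_le hx with hxd | hxlt
  · refine le_trans (hunder _ hpmem) (le_max_of_le_left ?_)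
    have hxe : x = xl := le_antisymm (hxd ▸ hx2) hx1
    subst hxe; simp; ring_nf; exact le_refl _
  rcases eq_or_lt_of_le hy with hyd | hylt
  · refine le_trans (hunder _ hpmem) (le_max_of_le_left ?_)
    have hye : y = yl := le_antisymm (hyd ▸ hy2) hy1
    subst hye; simp; ring_nf; exact le_refl _
  obtain ⟨s, hs0, hs1, hxs⟩ : ∃ s, 0 ≤ s ∧ s ≤ 1 ∧ x = xl + s * (xu - xl) := by
    refine ⟨(x - xl) / (xu - xl), div_nonneg (by linarith) (by linarith),
      (div_le_one (by linarith)).2 (by linarith), ?_⟩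
    rw [div_mul_cancel₀ _ (by linarith : xu - xl ≠ 0)]; ring
  obtain ⟨t, ht0, ht1, hyt⟩ : ∃ t, 0 ≤ t ∧ t ≤ 1 ∧ y = yl + t * (yu - yl) := by
    refine ⟨(y - yl) / (yu - yl), div_nonneg (by linarith) (by linarith),
      (div_le_one (by linarith)).2 (by linarith), ?_⟩
    rw [div_mul_cancel₀ _ (by linarith : yu - yl ≠ 0)]; ring
  subst hxs hyt
  have c1 : (xl, yl) ∈ Set.Icc xl xu ×ˢ Set.Icc yl yu := ⟨⟨le_refl _, hx⟩, ⟨le_refl _, hy⟩⟩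
  have c2 : (xu, yl) ∈ Set.Icc xl xu ×ˢ Set.Icc yl yu := ⟨⟨hx, le_refl _⟩, ⟨le_refl _, hy⟩⟩
  have c3 : (xl, yu) ∈ Set.Icc xl xu ×ˢ Set.Icc yl yu := ⟨⟨le_refl _, hx⟩, ⟨hy, le_refl _⟩⟩
  have c4 : (xu, yu) ∈ Set.Icc xl xu ×ˢ Set.Icc yl yu := ⟨⟨hx, le_refl _⟩, ⟨hy, le_refl _⟩⟩
  have hu1 := hunder _ c1
  have hu2 := hunder _ c2
  have hu3 := hunder _ c3
  have hu4 := hunder _ c4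
  simp only at hu1 hu2 hu3 hu4
  rcases le_total (s + t) 1 with hst | hst
  · -- lower-left triangle: first McCormick
    refine le_max_of_le_left ?_
    have hdecomp : ((xl + s * (xu - xl), yl + t * (yu - yl)) : ℝ × ℝ)
        = (1 - s - t) • ((xl, yl) : ℝ × ℝ) + s • (xu, yl) + t • (xl, yu) := by
      rw [Prod.ext_iff]
      constructor <;> simp [Prod.smul_mk, smul_eq_mul] <;> ring
    have h3 := three_pt_convex hconv (1 - s - t) s t (by linarith) hs0 ht0 (by ring) c1 c2 c3
    rw [← hdecomp] at h3
    calc φ (xl + s * (xu - xl), yl + t * (yu - yl))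
        ≤ (1 - s - t) * φ (xl, yl) + s * φ (xu, yl) + t * φ (xl, yu) := h3
      _ ≤ (1 - s - t) * (xl * yl) + s * (xu * yl) + t * (xl * yu) := by
          exact add_le_add (add_le_add (mul_le_mul_of_nonneg_left hu1 (by linarith))
            (mul_le_mul_of_nonneg_left hu2 hs0)) (mul_le_mul_of_nonneg_left hu3 ht0)
      _ ≤ xl * (xl + s * (xu - xl), yl + t * (yu - yl)).2
          + yl * (xl + s * (xu - xl), yl + t * (yu - yl)).1 - xl * yl := by
          simp only; ring_nf; exact le_refl _
  · -- upper-right triangle: second McCormick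
    refine le_max_of_le_right ?_
    have hdecomp : ((xl + s * (xu - xl), yl + t * (yu - yl)) : ℝ × ℝ)
        = (s + t - 1) • ((xu, yu) : ℝ × ℝ) + (1 - t) • (xu, yl) + (1 - s) • (xl, yu) := by
      rw [Prod.ext_iff]
      constructor <;> simp [Prod.smul_mk, smul_eq_mul] <;> ring
    have h3 := three_pt_convex hconv (s + t - 1) (1 - t) (1 - s)
      (by linarith) (by linarith) (by linarith) (by ring) c4 c2 c3
    rw [← hdecomp] at h3
    calc φ (xl + s * (xu - xl), yl + t * (yu - yl))
        ≤ (s + t - 1) * φ (xu, yu) + (1 - t) * φ (xu, yl) + (1 - s) * φ (xl, yu) := h3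
      _ ≤ (s + t - 1) * (xu * yu) + (1 - t) * (xu * yl) + (1 - s) * (xl * yu) := by
          exact add_le_add (add_le_add (mul_le_mul_of_nonneg_left hu4 (by linarith))
            (mul_le_mul_of_nonneg_left hu2 (by linarith))) (mul_le_mul_of_nonneg_left hu3 (by linarith))
      _ ≤ xu * (xl + s * (xu - xl), yl + t * (yu - yl)).2
          + yu * (xl + s * (xu - xl), yl + t * (yu - yl)).1 - xu * yu := by
          simp only; ring_nf; exact le_refl _
end

section
/- Let ι be a finite index set, let l, u : ι → ℝ with l ≤ u componentwise, and let B = {x : ι → ℝ | ∀ i, l i ≤ x i ≤ u i} be the corresponding box. Let h : (ι → ℝ) → ℝ be edge-concave on B, i.e., for every i ∈ ι and every x ∈ B, the univariate function t ↦ h(update of x at coordinate i by t) is concave on [l i, u i]. Then for every x ∈ B there exists a vertex v of B (i.e., a point v ∈ B with v i ∈ {l i, u i} for every i) such that h(v) ≤ h(x). -/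
/-- An edge-concave (componentwise concave) function on a box attains, for
every point of the box, a value at some vertex of the box that is at most the
value at this point. -/
theorem edge_concave_vertex_le
    {ι : Type*} [Fintype ι] [DecidableEq ι]
    (l u : ι → ℝ) (hlu : ∀ i, l i ≤ u i)
    (h : (ι → ℝ) → ℝ)
    (hec : ∀ (i : ι) (x : ι → ℝ), (∀ k, x k ∈ Set.Icc (l k) (u k)) →
      ConcaveOn ℝ (Set.Icc (l i) (u i)) (fun t => h (Function.update x i t))) :
    ∀ x : ι → ℝ, (∀ k, x k ∈ Set.Icc (l k) (u k)) →
      ∃ v : ι → ℝ, (∀ k, v k ∈ Set.Icc (l k) (u k)) ∧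
        (∀ i, v i = l i ∨ v i = u i) ∧ h v ≤ h x := by
  suffices H : ∀ s : Finset ι, ∀ x : ι → ℝ, (∀ k, x k ∈ Set.Icc (l k) (u k)) →
      ∃ v : ι → ℝ, (∀ k, v k ∈ Set.Icc (l k) (u k)) ∧
        (∀ i ∈ s, v i = l i ∨ v i = u i) ∧ (∀ i ∉ s, v i = x i) ∧ h v ≤ h x by
    intro x hx
    obtain ⟨v, hv1, hv2, _, hv4⟩ := H Finset.univ x hx
    exact ⟨v, hv1, fun i => hv2 i (Finset.mem_univ i), hv4⟩
  intro s
  induction s using Finset.induction with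
  | empty => intro x hx; exact ⟨x, hx, by simp, fun _ _ => rfl, le_rfl⟩
  | @insert a s ha ih =>
    intro x hx
    have hcon := hec a x hx
    have hl : l a ∈ Set.Icc (l a) (u a) := ⟨le_rfl, hlu a⟩
    have hu : u a ∈ Set.Icc (l a) (u a) := ⟨hlu a, le_rfl⟩
    have hmin := hcon.min_le_of_mem_Icc hl hu (hx a)
    have hxx : h (Function.update x a (x a)) = h x := by rw [Function.update_eq_self]
    -- choose endpoint t
    obtain ⟨t, ht, hht⟩ : ∃ t, (t = l a ∨ t = u a) ∧ h (Function.update x a t) ≤ h x := by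
      rcases min_le_iff.mp hmin with h1 | h1
      · exact ⟨l a, Or.inl rfl, by simpa [hxx] using h1⟩
      · exact ⟨u a, Or.inr rfl, by simpa [hxx] using h1⟩
    set y := Function.update x a t with hy
    have hyb : ∀ k, y k ∈ Set.Icc (l k) (u k) := by
      intro k
      by_cases hk : k = a
      · subst hk; simp [hy]; rcases ht with rfl | rfl
        · exact ⟨le_rfl, hlu k⟩
        · exact ⟨hlu k, le_rfl⟩
      · simpa [hy, Function.update_of_ne hk] using hx k
    obtain ⟨v, hv1, hv2, hv3, hv4⟩ := ih y hyb
    refine ⟨v, hv1, ?_, ?_, hv4.trans hht⟩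
    · intro i hi
      rcases Finset.mem_insert.mp hi with rfl | hi
      · rw [hv3 i ha, hy, Function.update_self]; exact ht
      · exact hv2 i hi
    · intro i hi
      have hia : i ≠ a := fun he => hi (he ▸ Finset.mem_insert_self a s)
      have his : i ∉ s := fun he => hi (Finset.mem_insert_of_mem he)
      rw [hv3 i his, hy, Function.update_of_ne hia]
end

section
/- Let ι be a finite index set, let l, u : ι → ℝ with l ≤ u componentwise, and let B = {x : ι → ℝ | ∀ i, l i ≤ x i ≤ u i}. Let h : (ι → ℝ) → ℝ be edge-concave on B, i.e., for every i ∈ ι and every x ∈ B, the function t ↦ h(update of x at coordinate i by t) is concave on [l i, u i]. Let ℓ(x) = ∑_i α i · x i + γ be an affine function (α : ι → ℝ, γ ∈ ℝ) such that ℓ(v) ≤ h(v) for every vertex v of B (every v ∈ B with v i ∈ {l i, u i} for all i). Then ℓ(x) ≤ h(x) for every x ∈ B; that is, any affine function that underestimates an edge-concave function at all vertices of the box underestimates it on the entire box. -/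
/-- Any affine function that underestimates an edge-concave function at all
vertices of a box underestimates it on the entire box. -/
theorem affine_underestimator_of_edge_concave_on_vertices
    {ι : Type*} [Fintype ι] [DecidableEq ι]
    (l u : ι → ℝ) (hlu : ∀ i, l i ≤ u i)
    (h : (ι → ℝ) → ℝ)
    (hec : ∀ (i : ι) (x : ι → ℝ), (∀ k, x k ∈ Set.Icc (l k) (u k)) →
      ConcaveOn ℝ (Set.Icc (l i) (u i)) (fun t => h (Function.update x i t)))
    (α : ι → ℝ) (γ : ℝ)
    (hvert : ∀ v : ι → ℝ, (∀ k, v k ∈ Set.Icc (l k) (u k)) →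
      (∀ i, v i = l i ∨ v i = u i) → (∑ i, α i * v i) + γ ≤ h v) :
    ∀ x : ι → ℝ, (∀ k, x k ∈ Set.Icc (l k) (u k)) →
      (∑ i, α i * x i) + γ ≤ h x := by
  suffices H : ∀ n : ℕ, ∀ x : ι → ℝ, (∀ k, x k ∈ Set.Icc (l k) (u k)) →
      (Finset.univ.filter (fun i => x i ≠ l i ∧ x i ≠ u i)).card ≤ n →
      (∑ i, α i * x i) + γ ≤ h x by
    intro x hx
    exact H _ x hx le_rfl
  intro n
  induction n with
  | zero =>
    intro x hx hc
    apply hvert x hx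
    intro i
    by_contra hcon
    push_neg at hcon
    have hi : i ∈ Finset.univ.filter (fun i => x i ≠ l i ∧ x i ≠ u i) := by
      simp [hcon.1, hcon.2]
    have := Finset.card_pos.mpr ⟨i, hi⟩
    omega
  | succ n ih =>
    intro x hx hc
    by_cases hS : (Finset.univ.filter (fun i => x i ≠ l i ∧ x i ≠ u i)) = ∅
    · apply hvert x hx
      intro i
      by_contra hcon
      push_neg at hcon
      have hi : i ∈ Finset.univ.filter (fun i => x i ≠ l i ∧ x i ≠ u i) := by
        simp [hcon.1, hcon.2]
      simp [hS] at hi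
    · obtain ⟨i, hi⟩ := Finset.nonempty_iff_ne_empty.mpr hS
      have hi' : x i ≠ l i ∧ x i ≠ u i := by simpa using hi
      have hli : l i < x i := lt_of_le_of_ne (hx i).1 (Ne.symm hi'.1)
      have hui : x i < u i := lt_of_le_of_ne (hx i).2 hi'.2
      have hd : (0:ℝ) < u i - l i := by linarith
      set a : ℝ := (u i - x i) / (u i - l i) with ha_def
      set b : ℝ := (x i - l i) / (u i - l i) with hb_def
      have ha : 0 ≤ a := div_nonneg (by linarith) hd.le
      have hb : 0 ≤ b := div_nonneg (by linarith) hd.le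
      have hab : a + b = 1 := by
        rw [ha_def, hb_def]; field_simp; ring
      have hcomb : a * l i + b * u i = x i := by
        rw [ha_def, hb_def]; field_simp; ring
      set xl := Function.update x i (l i) with hxl_def
      set xu := Function.update x i (u i) with hxu_def
      have hxlbox : ∀ k, xl k ∈ Set.Icc (l k) (u k) := by
        intro k
        rcases eq_or_ne k i with rfl | hk
        · simp [hxl_def, hlu k]
        · simpa [hxl_def, Function.update_of_ne hk] using hx k
      have hxubox : ∀ k, xu k ∈ Set.Icc (l k) (u k) := by
        intro k
        rcases eq_or_ne k i with rfl | hk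
        · simp [hxu_def, hlu k]
        · simpa [hxu_def, Function.update_of_ne hk] using hx k
      -- cardinality bounds
      have hsub : ∀ t : ℝ, (Finset.univ.filter
          (fun j => Function.update x i t j ≠ l j ∧ Function.update x i t j ≠ u j)) ⊆
          (Finset.univ.filter (fun j => x j ≠ l j ∧ x j ≠ u j)).erase i ∨ t ≠ l i ∧ t ≠ u i := by
        intro t
        by_cases ht : t = l i ∨ t = u i
        · left
          intro j hj
          simp only [Finset.mem_filter, Finset.mem_univ, true_and] at hj
          have hji : j ≠ i := by
            rintro rfl
            rcases ht with rfl | rfl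
            · exact hj.1 (by simp)
            · exact hj.2 (by simp)
          rw [Function.update_of_ne hji] at hj
          exact Finset.mem_erase.mpr ⟨hji, by simp [hj.1, hj.2]⟩
        · right; push_neg at ht; exact ht
      have hcard : ∀ t : ℝ, (t = l i ∨ t = u i) → (Finset.univ.filter
          (fun j => Function.update x i t j ≠ l j ∧ Function.update x i t j ≠ u j)).card ≤ n := by
        intro t ht
        rcases hsub t with hss | hcontra
        · have h1 := Finset.card_le_card hss
          have h2 : ((Finset.univ.filter (fun j => x j ≠ l j ∧ x j ≠ u j)).erase i).card =
              (Finset.univ.filter (fun j => x j ≠ l j ∧ x j ≠ u j)).card - 1 :=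
            Finset.card_erase_of_mem hi
          omega
        · rcases ht with rfl | rfl
          · exact absurd rfl hcontra.1
          · exact absurd rfl hcontra.2
      have hl1 : (∑ j, α j * xl j) + γ ≤ h xl := ih xl hxlbox (by
        simpa [hxl_def] using hcard (l i) (Or.inl rfl))
      have hl2 : (∑ j, α j * xu j) + γ ≤ h xu := ih xu hxubox (by
        simpa [hxu_def] using hcard (u i) (Or.inr rfl))
      -- concavity step
      have hconc := (hec i x hx).2 (Set.mem_Icc.mpr ⟨le_rfl, hlu i⟩)
        (Set.mem_Icc.mpr ⟨hlu i, le_rfl⟩) ha hb hab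
      simp only [smul_eq_mul] at hconc
      rw [hcomb, Function.update_eq_self] at hconc
      -- affine identity
      have hsum : ∀ t : ℝ, (∑ j, α j * Function.update x i t j)
          = α i * t + ∑ j ∈ Finset.univ.erase i, α j * x j := by
        intro t
        have : ∀ j, α j * Function.update x i t j =
            Function.update (fun j => α j * x j) i (α i * t) j := by
          intro j
          rcases eq_or_ne j i with rfl | hj
          · simp
          · simp [Function.update_of_ne hj]
        rw [Finset.sum_congr rfl (fun j _ => this j)]
        rw [Finset.sum_update_of_mem (Finset.mem_univ i)]
        simp [Finset.sum_sdiff_eq_sub, Finset.sum_erase_eq_sub (Finset.mem_univ i)]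
      have hx_sum : (∑ j, α j * x j) = α i * x i + ∑ j ∈ Finset.univ.erase i, α j * x j := by
        have := hsum (x i)
        rwa [Function.update_eq_self] at this
      set S : ℝ := ∑ j ∈ Finset.univ.erase i, α j * x j with hS_def
      have hlxl : (∑ j, α j * xl j) = α i * l i + S := hsum (l i)
      have hlxu : (∑ j, α j * xu j) = α i * u i + S := hsum (u i)
      have key : a * ((α i * l i + S) + γ) + b * ((α i * u i + S) + γ)
          = (α i * x i + S) + γ := by
        linear_combination α i * hcomb + (S + γ) * hab
      have step1 : a * ((∑ j, α j * xl j) + γ) ≤ a * h xl :=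
        mul_le_mul_of_nonneg_left hl1 ha
      have step2 : b * ((∑ j, α j * xu j) + γ) ≤ b * h xu :=
        mul_le_mul_of_nonneg_left hl2 hb
      calc (∑ j, α j * x j) + γ = a * ((∑ j, α j * xl j) + γ) + b * ((∑ j, α j * xu j) + γ) := by
            rw [hx_sum, hlxl, hlxu, key]
        _ ≤ a * h xl + b * h xu := add_le_add step1 step2
        _ ≤ h x := hconc
end

section
/- Let n ∈ ℕ, j ∈ {1,…,n}, and let l, u : Fin n → ℝ with l ≤ u componentwise. Let g : (Fin n → ℝ) → ℝ and ḡ ∈ ℝ, and suppose that for every x in the box (∀ i, l i ≤ x i ≤ u i), the univariate function t ↦ g(update of x at coordinate j by t) is convex on [l j, u j]. Let S = {x | (∀ i, l i ≤ x i ≤ u i) ∧ ḡ ≤ g(x)}. Then for every x ∈ S there exists x' ∈ S that differs from x only in coordinate j and satisfies x'_j ∈ {l j, u j}. Consequently, for any cost vector c : Fin n → ℝ with c j = 0, if x* minimizes cᵀx over S, then there exists an optimal solution x' of min{cᵀx : x ∈ S} with x'_j ∈ {l j, u j}. -/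
/-- If a bounded variable `x j` does not appear in the objective but only in a
single one-sided constraint `gbar ≤ g x` where `g` is convex in `x j` for every
fixing of the other variables, then every feasible point can be modified, only
in coordinate `j`, to a feasible point with `x j` at one of its bounds; in
particular there always exists an optimal solution with `x j ∈ {l j, u j}`. -/
theorem variable_fixing_convex_single_constraint
    (n : ℕ) (j : Fin n) (l u : Fin n → ℝ) (hlu : ∀ i, l i ≤ u i)
    (g : (Fin n → ℝ) → ℝ) (gbar : ℝ)
    (hconv : ∀ x : Fin n → ℝ, (∀ i, l i ≤ x i ∧ x i ≤ u i) →
      ConvexOn ℝ (Set.Icc (l j) (u j)) (fun t => g (Function.update x j t)))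
    (S : Set (Fin n → ℝ))
    (hS : S = {x | (∀ i, l i ≤ x i ∧ x i ≤ u i) ∧ gbar ≤ g x}) :
    (∀ x ∈ S, ∃ x' ∈ S, (∀ i, i ≠ j → x' i = x i) ∧ (x' j = l j ∨ x' j = u j)) ∧
    (∀ c : Fin n → ℝ, c j = 0 →
      ∀ xstar ∈ S, (∀ x ∈ S, ∑ i, c i * xstar i ≤ ∑ i, c i * x i) →
        ∃ x' ∈ S, (∀ x ∈ S, ∑ i, c i * x' i ≤ ∑ i, c i * x i) ∧
          (x' j = l j ∨ x' j = u j)) := by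
  subst hS
  have key : ∀ x ∈ ({x | (∀ i, l i ≤ x i ∧ x i ≤ u i) ∧ gbar ≤ g x} : Set (Fin n → ℝ)),
      ∃ x' ∈ ({x | (∀ i, l i ≤ x i ∧ x i ≤ u i) ∧ gbar ≤ g x} : Set (Fin n → ℝ)),
      (∀ i, i ≠ j → x' i = x i) ∧ (x' j = l j ∨ x' j = u j) := by
    intro x hx
    obtain ⟨hbox, hg⟩ := hx
    have hcv := hconv x hbox
    have hlm : l j ∈ Set.Icc (l j) (u j) := ⟨le_refl _, hlu j⟩
    have hum : u j ∈ Set.Icc (l j) (u j) := ⟨hlu j, le_refl _⟩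
    have hxj : x j ∈ segment ℝ (l j) (u j) := by
      rw [segment_eq_Icc (hlu j)]
      exact ⟨(hbox j).1, (hbox j).2⟩
    have hmax := hcv.le_on_segment hlm hum hxj
    have hx_eq : g (Function.update x j (x j)) = g x := by rw [Function.update_eq_self]
    rw [hx_eq] at hmax
    rcases le_max_iff.mp hmax with h | h
    · refine ⟨Function.update x j (l j), ⟨?_, le_trans hg h⟩, ?_, ?_⟩
      · intro i
        rcases eq_or_ne i j with rfl | hij
        · simp [hlu i]
        · simp [Function.update_of_ne hij, hbox i]
      · intro i hij; simp [Function.update_of_ne hij]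
      · left; simp
    · refine ⟨Function.update x j (u j), ⟨?_, le_trans hg h⟩, ?_, ?_⟩
      · intro i
        rcases eq_or_ne i j with rfl | hij
        · simp [hlu i]
        · simp [Function.update_of_ne hij, hbox i]
      · intro i hij; simp [Function.update_of_ne hij]
      · right; simp
  refine ⟨key, ?_⟩
  intro c hcj xstar hxstar hopt
  obtain ⟨x', hx'S, hx'eq, hx'j⟩ := key xstar hxstar
  have hsum : ∑ i, c i * x' i = ∑ i, c i * xstar i := by
    apply Finset.sum_congr rfl
    intro i _
    rcases eq_or_ne i j with rfl | hij
    · rw [hcj]; ring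
    · rw [hx'eq i hij]
  exact ⟨x', hx'S, fun x hx => hsum ▸ hopt x hx, hx'j⟩
end

section
/- Let k ≥ 1, s : Fin k → ℝ, and r ∈ ℝ. Then √(∑_{j} s_j²) ≤ r if and only if there exists z : Fin k → ℝ with z_j ≥ 0 for all j, s_j² ≤ z_j · r for all j, and ∑_j z_j ≤ r. In other words, a point satisfies the second-order cone constraint exactly when it can be extended by nonnegative disaggregation variables satisfying the rotated-cone constraints and the aggregation inequality; in particular, any point violating the second-order cone constraint must violate one of the disaggregated constraints for every choice of nonnegative z. -/
/-- Disaggregation of a second-order cone: `√(∑ s_j²) ≤ r` holds exactly when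
there are nonnegative disaggregation variables `z` with `s_j² ≤ z_j r` for all
`j` and `∑ z_j ≤ r`. -/
theorem soc_disaggregation
    (k : ℕ) (hk : 1 ≤ k) (s : Fin k → ℝ) (r : ℝ) :
    Real.sqrt (∑ j, s j ^ 2) ≤ r ↔
      ∃ z : Fin k → ℝ, (∀ j, 0 ≤ z j) ∧ (∀ j, s j ^ 2 ≤ z j * r) ∧
        (∑ j, z j) ≤ r := by
  have hsum : (0:ℝ) ≤ ∑ j, s j ^ 2 :=
    Finset.sum_nonneg fun j _ => sq_nonneg _
  constructor
  · intro h
    have hr : 0 ≤ r := le_trans (Real.sqrt_nonneg _) h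
    rcases eq_or_lt_of_le hr with hr0 | hr0
    · -- r = 0, so sum = 0, all s j = 0
      have hsq : Real.sqrt (∑ j, s j ^ 2) = 0 := le_antisymm (hr0 ▸ h) (Real.sqrt_nonneg _)
      have hs0 : (∑ j, s j ^ 2) = 0 := by
        have := Real.sqrt_eq_zero'.mp hsq
        linarith [this]
      refine ⟨fun _ => 0, fun j => le_rfl, fun j => ?_, by simp [← hr0]⟩
      have : s j ^ 2 = 0 := by
        have := (Finset.sum_eq_zero_iff_of_nonneg (fun i _ => sq_nonneg (s i))).mp hs0 j (Finset.mem_univ j)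
        exact this
      simp [this]
    · refine ⟨fun j => s j ^ 2 / r, fun j => div_nonneg (sq_nonneg _) hr, fun j => ?_, ?_⟩
      · rw [div_mul_cancel₀ _ (ne_of_gt hr0)]
      · have hle : (∑ j, s j ^ 2) ≤ r ^ 2 := by
          have := Real.sqrt_le_sqrt (le_of_eq (Real.sqrt_sq hr).symm) |>.trans_eq rfl
          calc (∑ j, s j ^ 2) = Real.sqrt (∑ j, s j ^ 2) ^ 2 := (Real.sq_sqrt hsum).symm
            _ ≤ r ^ 2 := by
                apply pow_le_pow_left₀ (Real.sqrt_nonneg _) h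
        rw [← Finset.sum_div]
        rw [div_le_iff₀ hr0]
        nlinarith
  · rintro ⟨z, hz, hzr, hsumz⟩
    have hzsum : 0 ≤ ∑ j, z j := Finset.sum_nonneg fun j _ => hz j
    have hr : 0 ≤ r := le_trans hzsum hsumz
    have h1 : (∑ j, s j ^ 2) ≤ (∑ j, z j) * r := by
      rw [Finset.sum_mul]
      exact Finset.sum_le_sum fun j _ => hzr j
    have h2 : (∑ j, s j ^ 2) ≤ r ^ 2 := by
      calc (∑ j, s j ^ 2) ≤ (∑ j, z j) * r := h1
        _ ≤ r * r := mul_le_mul_of_nonneg_right hsumz hr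
        _ = r ^ 2 := (sq r).symm
    calc Real.sqrt (∑ j, s j ^ 2) ≤ Real.sqrt (r ^ 2) := Real.sqrt_le_sqrt h2
      _ = r := Real.sqrt_sq hr
end

section
/- Let p, q ∈ ℕ, let h_nl, ℓ_nl : (Fin p → ℝ) → ℝ and h_l : (Fin q → ℝ) → ℝ be functions, and let u⁰ ∈ (Fin p → ℝ). Assume ℓ_nl(u) ≤ h_nl(u) for all u ∈ Fin p → ℝ. Then for all u : Fin p → ℝ, v : Fin q → ℝ, and y ∈ ℝ with y ∈ {0, 1} and (y = 0 → u = u⁰), the perspective-strengthened estimator satisfies ℓ_nl(u) + (h_nl(u⁰) − ℓ_nl(u⁰))·(1 − y) + h_l(v) ≤ h_nl(u) + h_l(v), with equality whenever y = 0. Moreover, when y = 1 the strengthened estimator coincides with the original estimator ℓ_nl(u) + h_l(v). -/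
/-- Perspective strengthening: if `ℓnl` underestimates `hnl` everywhere and the
variables `u` are semi-continuous with respect to the binary indicator `y`
(taking the value `u0` when `y = 0`), then the strengthened estimator
`ℓnl(u) + (hnl(u0) − ℓnl(u0))(1 − y) + hl(v)` underestimates
`hnl(u) + hl(v)`, is tight whenever `y = 0`, and coincides with the original
estimator `ℓnl(u) + hl(v)` when `y = 1`. -/
theorem perspective_strengthening
    (p q : ℕ)
    (hnl ℓnl : (Fin p → ℝ) → ℝ) (hl : (Fin q → ℝ) → ℝ)
    (u0 : Fin p → ℝ)
    (hunder : ∀ u, ℓnl u ≤ hnl u) :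
    ∀ (u : Fin p → ℝ) (v : Fin q → ℝ) (y : ℝ),
      (y = 0 ∨ y = 1) → (y = 0 → u = u0) →
      (ℓnl u + (hnl u0 - ℓnl u0) * (1 - y) + hl v ≤ hnl u + hl v) ∧
      (y = 0 → ℓnl u + (hnl u0 - ℓnl u0) * (1 - y) + hl v = hnl u + hl v) ∧
      (y = 1 → ℓnl u + (hnl u0 - ℓnl u0) * (1 - y) + hl v = ℓnl u + hl v) := by
  intro u v y hy hsc
  rcases hy with h0 | h1
  · subst h0
    have hu := hsc rfl
    subst hu
    refine ⟨le_of_eq ?_, fun _ => ?_, fun h => by norm_num at h⟩ <;> ring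
  · subst h1
    refine ⟨?_, fun h => by norm_num at h, fun _ => by ring⟩
    have := hunder u
    nlinarith
end

section
/- For all real numbers x̂, x, y, w such that x² ≤ w, y ∈ {0, 1}, and (y = 0 → x = 0), the perspective-strengthened gradient cut x̂² + 2·x̂·(x − x̂) + x̂²·(1 − y) ≤ w holds. -/
/-- The perspective-strengthened gradient cut for the set
`{(x, y, w) : x² ≤ w, y ∈ {0,1}, y = 0 → x = 0}` is valid. -/
theorem perspective_gradient_cut_valid
    (xhat x y w : ℝ) (hxw : x ^ 2 ≤ w) (hy : y = 0 ∨ y = 1)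
    (hsemi : y = 0 → x = 0) :
    xhat ^ 2 + 2 * xhat * (x - xhat) + xhat ^ 2 * (1 - y) ≤ w := by
  rcases hy with h | h
  · have hx := hsemi h
    subst hx h
    nlinarith [sq_nonneg xhat]
  · subst h
    nlinarith [sq_nonneg (x - xhat)]
end

section
/- Let D ∈ ℝ^{ℓ×n}, d ∈ ℝ^ℓ, c ∈ ℝⁿ, U ∈ ℝ, and fix an index k ∈ {1,…,n}. Let λ ∈ ℝ^ℓ with λ ≥ 0 and μ ∈ ℝ with μ ≥ 0, and define r = e_k − Dᵀλ − μ·c ∈ ℝⁿ. Let l, u ∈ ℝⁿ. Then for every x ∈ ℝⁿ satisfying Dx ≤ d, cᵀx ≤ U, and l ≤ x ≤ u componentwise, it holds that x_k ≤ ∑_{j : r_j < 0} r_j·l_j + ∑_{j : r_j > 0} r_j·u_j + λᵀd + μ·U. -/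
open Matrix

/-- Propagation of a Lagrangian variable bound over the variable bounds:
for dual multipliers `lam ≥ 0`, `μ ≥ 0` and the reduced cost vector
`r = e_k − Dᵀ lam − μ c`, every `x` with `Dx ≤ d`, `cᵀx ≤ U`, and
`lo ≤ x ≤ up` satisfies
`x_k ≤ ∑_{j : r_j < 0} r_j lo_j + ∑_{j : r_j > 0} r_j up_j + lamᵀd + μ U`. -/
theorem lagrangian_variable_bound_propagation
    (ℓ n : ℕ) (D : Matrix (Fin ℓ) (Fin n) ℝ) (d : Fin ℓ → ℝ)
    (c : Fin n → ℝ) (U : ℝ) (k : Fin n)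
    (lam : Fin ℓ → ℝ) (hlam : ∀ i, 0 ≤ lam i)
    (μ : ℝ) (hμ : 0 ≤ μ)
    (r : Fin n → ℝ)
    (hr : ∀ j, r j = (if j = k then (1 : ℝ) else 0) - (Dᵀ *ᵥ lam) j - μ * c j)
    (lo up : Fin n → ℝ) :
    ∀ x : Fin n → ℝ, (∀ i, (D *ᵥ x) i ≤ d i) → c ⬝ᵥ x ≤ U →
      (∀ j, lo j ≤ x j ∧ x j ≤ up j) →
      x k ≤ (∑ j ∈ Finset.univ.filter (fun j => r j < 0), r j * lo j) +
            (∑ j ∈ Finset.univ.filter (fun j => 0 < r j), r j * up j) +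
            lam ⬝ᵥ d + μ * U := by

  intro x hDx hcx hlu
  -- identity: x k = r ⬝ x + lam ⬝ (D x) + μ (c ⬝ x)
  have hid : x k = (∑ j, r j * x j) + lam ⬝ᵥ (D *ᵥ x) + μ * (c ⬝ᵥ x) := by
    have h1 : (∑ j, r j * x j)
        = x k - (Dᵀ *ᵥ lam) ⬝ᵥ x - μ * (c ⬝ᵥ x) := by
      simp only [hr, sub_mul, ite_mul, one_mul, zero_mul, Finset.sum_sub_distrib,
        dotProduct, Finset.mul_sum]
      rw [Finset.sum_ite_eq' Finset.univ k x]
      simp [mul_assoc]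
    have h2 : (Dᵀ *ᵥ lam) ⬝ᵥ x = lam ⬝ᵥ (D *ᵥ x) := by
      rw [Matrix.mulVec_transpose, ← Matrix.dotProduct_mulVec]
    rw [h1, h2]; ring
  have hsum : (∑ j, r j * x j)
      ≤ (∑ j ∈ Finset.univ.filter (fun j => r j < 0), r j * lo j) +
        (∑ j ∈ Finset.univ.filter (fun j => 0 < r j), r j * up j) := by
    have hsplit : (∑ j, r j * x j)
        = (∑ j ∈ Finset.univ.filter (fun j => r j < 0), r j * x j) +
          (∑ j ∈ Finset.univ.filter (fun j => 0 < r j), r j * x j) := by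
      rw [← Finset.sum_filter_add_sum_filter_not Finset.univ (fun j => r j < 0)]
      congr 1
      rw [← Finset.sum_filter_add_sum_filter_not
        (Finset.univ.filter (fun j => ¬ r j < 0)) (fun j => 0 < r j)]
      have : ∀ j ∈ (Finset.univ.filter (fun j => ¬ r j < 0)).filter
          (fun j => ¬ 0 < r j), r j * x j = 0 := by
        intro j hj
        simp only [Finset.mem_filter, not_lt] at hj
        have : r j = 0 := le_antisymm hj.2 hj.1.2
        simp [this]
      rw [Finset.sum_eq_zero this, add_zero, Finset.filter_filter]
      apply Finset.sum_congr _ (fun _ _ => rfl)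
      apply Finset.filter_congr
      intro j _
      constructor
      · intro h; exact h.2
      · intro h; exact ⟨not_lt.2 h.le, h⟩
    rw [hsplit]
    apply add_le_add
    · apply Finset.sum_le_sum
      intro j hj
      simp only [Finset.mem_filter] at hj
      exact mul_le_mul_of_nonpos_left (hlu j).1 hj.2.le
    · apply Finset.sum_le_sum
      intro j hj
      simp only [Finset.mem_filter] at hj
      exact mul_le_mul_of_nonneg_left (hlu j).2 hj.2.le
  have hld : lam ⬝ᵥ (D *ᵥ x) ≤ lam ⬝ᵥ d := by
    apply Finset.sum_le_sum
    intro i _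
    exact mul_le_mul_of_nonneg_left (hDx i) (hlam i)
  have hmu : μ * (c ⬝ᵥ x) ≤ μ * U := mul_le_mul_of_nonneg_left hcx hμ
  rw [hid]
  have := add_le_add (add_le_add hsum hld) hmu
  linarith
end

section
/- Let a, b, c, d, e, l, u be real numbers with l ≤ u, and define f : ℝ → ℝ by f(y) = (a·y + b)/(c·y + d) + e. If c·y + d ≠ 0 for every y ∈ [l, u], then f is convex on [l, u] or f is concave on [l, u]. -/
private lemma aux_quotient_convex (a b c d e l u : ℝ)
    (hpos : ∀ y ∈ Set.Icc l u, 0 < c * y + d)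
    (hk : 0 ≤ c * (b * c - a * d)) :
    ConvexOn ℝ (Set.Icc l u) (fun y => (a * y + b) / (c * y + d) + e) := by
  refine ⟨convex_Icc l u, ?_⟩
  intro x hx y hy p q hp hq hpq
  have hD1 := hpos x hx
  have hD2 := hpos y hy
  have hz : p • x + q • y ∈ Set.Icc l u := (convex_Icc l u) hx hy hp hq hpq
  have hDz := hpos _ hz
  simp only [smul_eq_mul] at *
  have key : (a * (p * x + q * y) + b) / (c * (p * x + q * y) + d) ≤
      p * ((a * x + b) / (c * x + d)) + q * ((a * y + b) / (c * y + d)) := by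
    have e1 : p * ((a * x + b) / (c * x + d)) + q * ((a * y + b) / (c * y + d)) =
        (p * (a * x + b) * (c * y + d) + q * (a * y + b) * (c * x + d)) /
          ((c * x + d) * (c * y + d)) := by
      rw [mul_div_assoc', mul_div_assoc', div_add_div _ _ hD1.ne' hD2.ne']; ring
    rw [e1, div_le_div_iff₀ hDz (mul_pos hD1 hD2)]
    have hq' : q = 1 - p := by linarith
    subst hq'
    nlinarith [mul_nonneg (mul_nonneg (mul_nonneg hp hq) (sq_nonneg (x - y))) hk]
  calc (a * (p * x + q * y) + b) / (c * (p * x + q * y) + d) + e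
      ≤ (p * ((a * x + b) / (c * x + d)) + q * ((a * y + b) / (c * y + d))) + e :=
        add_le_add_left key e
    _ = p * ((a * x + b) / (c * x + d) + e) + q * ((a * y + b) / (c * y + d) + e) := by
        rw [show p * ((a * x + b) / (c * x + d) + e) + q * ((a * y + b) / (c * y + d) + e)
          = (p * ((a * x + b) / (c * x + d)) + q * ((a * y + b) / (c * y + d))) + (p + q) * e
          from by ring, hpq, one_mul]

/-- The univariate fractional function `y ↦ (a y + b)/(c y + d) + e` is convex
or concave on any interval `[l, u]` on which its denominator does not
vanish. -/
theorem univariate_quotient_convex_or_concave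
    (a b c d e l u : ℝ) (hlu : l ≤ u)
    (hden : ∀ y ∈ Set.Icc l u, c * y + d ≠ 0) :
    ConvexOn ℝ (Set.Icc l u) (fun y => (a * y + b) / (c * y + d) + e) ∨
    ConcaveOn ℝ (Set.Icc l u) (fun y => (a * y + b) / (c * y + d) + e) := by
  have hl : l ∈ Set.Icc l u := ⟨le_refl l, hlu⟩
  have hsign : (∀ y ∈ Set.Icc l u, 0 < c * y + d) ∨ (∀ y ∈ Set.Icc l u, c * y + d < 0) := by
    rcases lt_or_gt_of_ne (hden l hl) with h | h
    · right
      intro y hy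
      rcases lt_or_gt_of_ne (hden y hy) with h' | h'
      · exact h'
      · exfalso
        have hc : c ≠ 0 := by
          intro hc0; rw [hc0] at h h'; simp at h h'; linarith
        have hroot : c * (-d / c) + d = 0 := by field_simp; ring
        have hr : (-d / c) ∈ Set.Icc l u := by
          constructor
          · rcases lt_or_gt_of_ne hc with hcneg | hcpos
            · nlinarith [hy.1]
            · nlinarith [hy.1]
          · rcases lt_or_gt_of_ne hc with hcneg | hcpos
            · nlinarith [hy.1, hy.2]
            · nlinarith [hy.1, hy.2]
        exact hden _ hr hroot
    · left
      intro y hy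
      rcases lt_or_gt_of_ne (hden y hy) with h' | h'
      · exfalso
        have hc : c ≠ 0 := by
          intro hc0; rw [hc0] at h h'; simp at h h'; linarith
        have hroot : c * (-d / c) + d = 0 := by field_simp; ring
        have hr : (-d / c) ∈ Set.Icc l u := by
          constructor
          · rcases lt_or_gt_of_ne hc with hcneg | hcpos
            · nlinarith [hy.1]
            · nlinarith [hy.1]
          · rcases lt_or_gt_of_ne hc with hcneg | hcpos
            · nlinarith [hy.1, hy.2]
            · nlinarith [hy.1, hy.2]
        exact hden _ hr hroot
      · exact h'
  rcases hsign with hpos | hneg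
  · rcases le_total 0 (c * (b * c - a * d)) with hk | hk
    · exact Or.inl (aux_quotient_convex a b c d e l u hpos hk)
    · right
      rw [← neg_convexOn_iff]
      have : (-fun y => (a * y + b) / (c * y + d) + e) =
          fun y => ((-a) * y + (-b)) / (c * y + d) + (-e) := by
        funext y
        simp only [Pi.neg_apply]
        rw [neg_add, ← neg_div]
        ring_nf
      rw [this]
      exact aux_quotient_convex (-a) (-b) c d (-e) l u hpos (by nlinarith)
  · have hpos' : ∀ y ∈ Set.Icc l u, 0 < (-c) * y + (-d) := by
      intro y hy; have := hneg y hy; linarith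
    rcases le_total 0 (c * (b * c - a * d)) with hk | hk
    · right
      rw [← neg_convexOn_iff]
      have : (-fun y => (a * y + b) / (c * y + d) + e) =
          fun y => (a * y + b) / ((-c) * y + (-d)) + (-e) := by
        funext y
        simp only [Pi.neg_apply]
        rw [neg_add, ← div_neg]
        ring_nf
      rw [this]
      exact aux_quotient_convex a b (-c) (-d) (-e) l u hpos' (by nlinarith)
    · left
      have : (fun y => (a * y + b) / (c * y + d) + e) =
          fun y => ((-a) * y + (-b)) / ((-c) * y + (-d)) + e := by
        funext y
        rw [show (-a) * y + (-b) = -(a * y + b) from by ring,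
          show (-c) * y + (-d) = -(c * y + d) from by ring, neg_div_neg_eq]
      rw [this]
      exact aux_quotient_convex (-a) (-b) (-c) (-d) e l u hpos' (by nlinarith)
end

section
/- Let E be a real normed vector space, let C ⊆ E be convex, let x̂ be in the interior of C, and let S ⊆ E be a set with S ∩ interior(C) = ∅. Let ι be a finite index set, let r : ι → E be ray directions, and let t : ι → ℝ with t j > 0 and x̂ + (t j) • (r j) ∈ C for every j ∈ ι. Then for every λ : ι → ℝ with λ j ≥ 0 for all j and ∑_j λ j / t j < 1, the point x̂ + ∑_j (λ j) • (r j) lies in the interior of C; in particular it does not belong to S. Equivalently, the intersection cut ∑_j λ j / t j ≥ 1 is valid for every point of S of the form x̂ + ∑_j (λ j) • (r j) with λ ≥ 0, while it is violated by x̂ itself. -/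
/-- Validity of intersection cuts: if `C` is an `S`-free convex set containing
`xhat` in its interior, and along each extreme ray direction `r j` a step length
`t j > 0` with `xhat + t j • r j ∈ C` is given, then every point
`xhat + ∑ j, λ j • r j` of the cone with `λ ≥ 0` violating the intersection cut,
i.e., with `∑ j, λ j / t j < 1`, lies in the interior of `C` and hence does not
belong to `S`. -/
theorem intersection_cut_valid
    {E : Type*} [NormedAddCommGroup E] [NormedSpace ℝ E]
    {ι : Type*} [Fintype ι]
    (C : Set E) (hC : Convex ℝ C)
    (xhat : E) (hxhat : xhat ∈ interior C)
    (S : Set E) (hS : S ∩ interior C = ∅)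
    (r : ι → E) (t : ι → ℝ) (ht : ∀ j, 0 < t j)
    (hray : ∀ j, xhat + t j • r j ∈ C) :
    ∀ lam : ι → ℝ, (∀ j, 0 ≤ lam j) → (∑ j, lam j / t j) < 1 →
      (xhat + ∑ j, lam j • r j) ∈ interior C ∧ (xhat + ∑ j, lam j • r j) ∉ S := by
  intro lam hlam hsum
  set μ : ι → ℝ := fun j => lam j / t j with hμ
  have hμ0 : ∀ j, 0 ≤ μ j := fun j => div_nonneg (hlam j) (ht j).le
  have hs0 : (0:ℝ) ≤ ∑ j, μ j := Finset.sum_nonneg fun j _ => hμ0 j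
  have hlam_eq : ∀ j, lam j = μ j * t j := by
    intro j
    simp only [hμ]; rw [div_mul_cancel₀ _ (ht j).ne']
  have key : (xhat + ∑ j, lam j • r j) ∈ interior C := by
    rcases eq_or_lt_of_le hs0 with h0 | hpos
    · have hz : ∀ j, μ j = 0 := fun j =>
        (Finset.sum_eq_zero_iff_of_nonneg (fun j _ => hμ0 j)).mp h0.symm j (Finset.mem_univ j)
      have hl : ∀ j, lam j = 0 := fun j => by rw [hlam_eq j, hz j, zero_mul]
      simpa [hl] using hxhat
    · set s : ℝ := ∑ j, μ j with hsdef
      have hsne : s ≠ 0 := hpos.ne'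
      set z : E := s⁻¹ • ∑ j, μ j • (xhat + t j • r j) with hz
      have hzC : z ∈ C := by
        have h1 : ∑ j, (μ j / s) = 1 := by
          rw [← Finset.sum_div, ← hsdef, div_self hsne]
        have := hC.sum_mem (t := Finset.univ)
          (fun j _ => div_nonneg (hμ0 j) hpos.le) h1 (fun j _ => hray j)
        convert this using 1
        rw [hz, Finset.smul_sum]
        refine Finset.sum_congr rfl fun j _ => ?_
        rw [smul_smul, div_eq_inv_mul]
      have heq : xhat + ∑ j, lam j • r j = (1 - s) • xhat + s • z := by
        rw [hz, smul_smul, mul_inv_cancel₀ hsne, one_smul]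
        have : ∑ j, μ j • (xhat + t j • r j) = s • xhat + ∑ j, lam j • r j := by
          rw [hsdef, Finset.sum_smul]
          rw [← Finset.sum_add_distrib]
          refine Finset.sum_congr rfl fun j _ => ?_
          rw [smul_add, smul_smul, ← hlam_eq j]
        rw [this, sub_smul, one_smul]
        abel
      rw [heq]
      have hsum' : 1 - s > 0 := by
        have : s < 1 := hsum
        linarith
      exact hC.combo_interior_closure_mem_interior hxhat (subset_closure hzC) hsum'
        hpos.le (by ring)
  refine ⟨key, fun hmem => ?_⟩
  have : (xhat + ∑ j, lam j • r j) ∈ S ∩ interior C := ⟨hmem, key⟩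
  rw [hS] at this
  exact this
end
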